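/- (Lloyd's Theorem.) Let Γ be a distance-regular graph and C a completely regular code in Γ with covering radius ρ. Then the quotient matrix U of Γ with respect to C has exactly ρ + 1 distinct eigenvalues, namely {θ_j : j ∈ S*(C) ∪ {0}}; in particular, every eigenvalue of U is an eigenvalue of Γ. -/

import Mathlib

open Finset Matrix

variable {V : Type*}

/-- `G` is a distance-regular graph with valency `k`, diameter `D`,
and intersection numbers `b i`, `c i`. -/
def IsDRG [Fintype V] (G : SimpleGraph V) [DecidableRel G.Adj]
    (k D : ℕ) (b c : ℕ → ℕ) : Prop :=
  G.Connected ∧ (∀ v, G.degree v = k) ∧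
    (∀ x y : V, G.dist x y ≤ D) ∧ (∃ x y : V, G.dist x y = D) ∧
    ∀ i ≤ D, ∀ x y : V, G.dist x y = i →
      ((Finset.univ.filter fun z => G.Adj y z ∧ G.dist x z = i - 1).card = c i ∧
       (Finset.univ.filter fun z => G.Adj y z ∧ G.dist x z = i + 1).card = b i)

/-- the distance from a vertex `v` to the code `C` -/
noncomputable def codeDist (G : SimpleGraph V) (C : Finset V) (v : V) : ℕ :=
  sInf {n | ∃ y ∈ C, G.dist v y = n}

/-- the characteristic vector of a code -/
def charVec [DecidableEq V] (C : Finset V) : V → ℂ :=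
  fun v => if v ∈ C then 1 else 0

/-- the characteristic vector of the `i`-th cell `C_i` of the distance partition -/
noncomputable def cellVec (G : SimpleGraph V) (C : Finset V) (i : ℕ) : V → ℂ :=
  fun v => if codeDist G C v = i then 1 else 0

/-- the `i`-th cell `C_i` of the distance partition, as a finset -/
noncomputable def cellFinset [Fintype V] (G : SimpleGraph V) (C : Finset V) (i : ℕ) : Finset V :=
  Finset.univ.filter fun v => codeDist G C v = i

/-- the number of neighbours of `v` lying in the `j`-th cell `C_j` -/
noncomputable def nbrsInCell [Fintype V] (G : SimpleGraph V) [DecidableRel G.Adj]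
    (C : Finset V) (j : ℕ) (v : V) : ℕ :=
  (Finset.univ.filter fun z => G.Adj v z ∧ codeDist G C z = j).card

/-- `C` is a completely regular code with covering radius `ρ` and
intersection numbers `γ i, α i, β i`. -/
def IsCRC [Fintype V] (G : SimpleGraph V) [DecidableRel G.Adj]
    (C : Finset V) (ρ : ℕ) (γ α β : ℕ → ℕ) : Prop :=
  C.Nonempty ∧ (∀ v, codeDist G C v ≤ ρ) ∧ (∃ v, codeDist G C v = ρ) ∧
    (∀ i, 1 ≤ i → i ≤ ρ → ∀ v, codeDist G C v = i → nbrsInCell G C (i - 1) v = γ i) ∧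
    (∀ i ≤ ρ, ∀ v, codeDist G C v = i → nbrsInCell G C i v = α i) ∧
    (∀ i ≤ ρ, ∀ v, codeDist G C v = i → nbrsInCell G C (i + 1) v = β i)

/-- the outer distribution module `𝔸x` of the code `C`, where `𝔸` is the
Bose-Mesner algebra (the algebra generated by the adjacency matrix) -/
noncomputable def outerModule [Fintype V] [DecidableEq V] (G : SimpleGraph V)
    [DecidableRel G.Adj] (C : Finset V) : Submodule ℂ (V → ℂ) :=
  Submodule.span ℂ {w | ∃ M ∈ Algebra.adjoin ℂ {G.adjMatrix ℂ}, w = M *ᵥ charVec C}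

/-- the tridiagonal quotient matrix `U` of a completely regular code -/
def quotientMatrix (F : Type*) [Semiring F] (γ α β : ℕ → ℕ) (ρ : ℕ) :
    Matrix (Fin (ρ + 1)) (Fin (ρ + 1)) F :=
  Matrix.of fun i j =>
    if (i : ℕ) = (j : ℕ) + 1 then (γ (i : ℕ) : F)
    else if (i : ℕ) = (j : ℕ) then (α (i : ℕ) : F)
    else if (j : ℕ) = (i : ℕ) + 1 then (β (i : ℕ) : F)
    else 0

/-- `θ` lists the distinct eigenvalues of `A` and `E j` is the orthogonal
projection onto the eigenspace of `θ j` (the primitive idempotents). -/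
def PrimIdem [Fintype V] [DecidableEq V] (A : Matrix V V ℂ) (D : ℕ)
    (θ : Fin (D + 1) → ℝ) (E : Fin (D + 1) → Matrix V V ℂ) : Prop :=
  Function.Injective θ ∧ (∀ j, E j * E j = E j) ∧ (∀ j, (E j)ᴴ = E j) ∧
    (∀ j, A * E j = (θ j : ℂ) • E j) ∧ (∑ j, E j = 1) ∧ (∀ j, E j ≠ 0)

/-- `q` are the Krein parameters of the primitive idempotents `E`. -/
def KreinRel [Fintype V] (D : ℕ) (E : Fin (D + 1) → Matrix V V ℂ)
    (q : Fin (D + 1) → Fin (D + 1) → Fin (D + 1) → ℝ) : Prop :=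
  ∀ i j, Matrix.hadamard (E i) (E j) = (Fintype.card V : ℂ)⁻¹ • ∑ l, (q i j l : ℂ) • E l

/-- the Krein parameters satisfy the `Q`-polynomial condition with respect to the
given ordering of the primitive idempotents -/
def QPolyKrein (D : ℕ) (q : Fin (D + 1) → Fin (D + 1) → Fin (D + 1) → ℝ) : Prop :=
  ∀ i j l : Fin (D + 1),
    (¬(((i : ℤ) - (j : ℤ)).natAbs ≤ (l : ℕ) ∧ (l : ℕ) ≤ (i : ℕ) + (j : ℕ)) → q i j l = 0) ∧
    (((l : ℕ) = ((i : ℤ) - (j : ℤ)).natAbs ∨ (l : ℕ) = (i : ℕ) + (j : ℕ)) → q i j l ≠ 0)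

/-- a matrix is irreducible tridiagonal if all entries at distance more than one from
the diagonal vanish and all sub- and super-diagonal entries are nonzero -/
def IrredTridiag {n : ℕ} {F : Type*} [Zero F] (M : Matrix (Fin n) (Fin n) F) : Prop :=
  (∀ i j : Fin n, 1 < (((i : ℕ) : ℤ) - ((j : ℕ) : ℤ)).natAbs → M i j = 0) ∧
  (∀ i j : Fin n, (((i : ℕ) : ℤ) - ((j : ℕ) : ℤ)).natAbs = 1 → M i j ≠ 0)

/-- `C` is a Leonard completely regular code with respect to the (nontrivial)
eigenvalue `θ t`: for some ordering `σ` of the basis `ℬ = {E_j x ≠ 0}` of the outer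
distribution module, the matrix representing `y ↦ (E t x) ∘ y` is irreducible
tridiagonal. -/
def IsLeonardWrt [Fintype V] [DecidableEq V] (D ρ : ℕ)
    (E : Fin (D + 1) → Matrix V V ℂ) (C : Finset V) (t : Fin (D + 1)) : Prop :=
  E t *ᵥ charVec C ≠ 0 ∧
    ∃ σ : Fin (ρ + 1) → Fin (D + 1), Function.Injective σ ∧
      (∀ j : Fin (D + 1), E j *ᵥ charVec C ≠ 0 ↔ j ∈ Set.range σ) ∧
      ∃ M : Matrix (Fin (ρ + 1)) (Fin (ρ + 1)) ℂ, IrredTridiag M ∧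
        ∀ j, (E t *ᵥ charVec C) * (E (σ j) *ᵥ charVec C) =
          ∑ l, M l j • (E (σ l) *ᵥ charVec C)

/-- `C` is a Leonard completely regular code: it is Leonard with respect to some
nontrivial eigenvalue. -/
def IsLeonard [Fintype V] [DecidableEq V] (D ρ : ℕ)
    (E : Fin (D + 1) → Matrix V V ℂ) (C : Finset V) : Prop :=
  ∃ t : Fin (D + 1), t ≠ 0 ∧ IsLeonardWrt D ρ E C t

/-- `C` is a `Q`-polynomial completely regular code with respect to the eigenvalue
`θ t`: there is an ordering `Spec C = {θ 0, θ (σ 1), …, θ (σ ρ)}` with `σ 1 = t`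
such that the entrywise `p`-th power of `u = E t x` lies in
`V_{σ 0} + ⋯ + V_{σ p}` for all `0 ≤ p ≤ ρ`. -/
def IsQPolyCodeWrt [Fintype V] [DecidableEq V] (G : SimpleGraph V) [DecidableRel G.Adj]
    (D ρ : ℕ) (θ : Fin (D + 1) → ℝ) (E : Fin (D + 1) → Matrix V V ℂ)
    (γ α β : ℕ → ℕ) (C : Finset V) (t : Fin (D + 1)) : Prop :=
  ∃ σ : Fin (ρ + 1) → Fin (D + 1), σ 0 = 0 ∧ Function.Injective σ ∧ σ 1 = t ∧
    spectrum ℂ (quotientMatrix ℂ γ α β ρ) = Set.range (fun j => (θ (σ j) : ℂ)) ∧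
    ∀ p : Fin (ρ + 1), (fun v => (E t *ᵥ charVec C) v ^ (p : ℕ)) ∈
      ⨆ (j : Fin (ρ + 1)) (_ : j ≤ p),
        Module.End.eigenspace (Matrix.mulVecLin (G.adjMatrix ℂ)) ((θ (σ j) : ℂ))

/-- `C` is a `Q`-polynomial completely regular code. -/
def IsQPolyCode [Fintype V] [DecidableEq V] (G : SimpleGraph V) [DecidableRel G.Adj]
    (D ρ : ℕ) (θ : Fin (D + 1) → ℝ) (E : Fin (D + 1) → Matrix V V ℂ)
    (γ α β : ℕ → ℕ) (C : Finset V) : Prop :=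
  ∃ t : Fin (D + 1), IsQPolyCodeWrt G D ρ θ E γ α β C t

/-- a translation graph on an abelian group: adjacency is invariant under translation -/
def IsTranslationGraph {X : Type*} [AddCommGroup X] (G : SimpleGraph X) : Prop :=
  ∀ x y z : X, G.Adj x y → G.Adj (x + z) (y + z)

/-- the coset graph of an additive code `C`: cosets `C'` and `C''` are adjacent if
`Γ` has an edge with one end in `C'` and the other in `C''` -/
def cosetGraph {X : Type*} [AddCommGroup X] (G : SimpleGraph X) (C : AddSubgroup X) :
    SimpleGraph (X ⧸ C) where
  Adj a b := a ≠ b ∧ ∃ x y : X,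
    QuotientAddGroup.mk x = a ∧ QuotientAddGroup.mk y = b ∧ G.Adj x y
  symm := ⟨fun a b ⟨hne, x, y, hx, hy, h⟩ => ⟨hne.symm, y, x, hy, hx, h.symm⟩⟩
  loopless := ⟨fun a ⟨hne, _⟩ => hne rfl⟩

/-- `G` is a `Q`-polynomial distance-regular graph: it is distance-regular and
admits an ordering of its primitive idempotents whose Krein parameters satisfy
the `Q`-polynomial condition -/
def IsQPolyDRG {W : Type*} [Fintype W] [DecidableEq W]
    (G : SimpleGraph W) [DecidableRel G.Adj] : Prop :=
  ∃ (k D : ℕ) (b c : ℕ → ℕ), IsDRG G k D b c ∧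
    ∃ (θ : Fin (D + 1) → ℝ) (E : Fin (D + 1) → Matrix W W ℂ)
      (q : Fin (D + 1) → Fin (D + 1) → Fin (D + 1) → ℝ),
      θ 0 = k ∧ PrimIdem (G.adjMatrix ℂ) D θ E ∧ KreinRel D E q ∧ QPolyKrein D q



section AuxCode
variable {G : SimpleGraph V} {C : Finset V}

lemma codeDist_exists (hC : C.Nonempty) (v : V) :
    ∃ y ∈ C, G.dist v y = codeDist G C v := by
  have : {n | ∃ y ∈ C, G.dist v y = n}.Nonempty := ⟨_, hC.choose, hC.choose_spec, rfl⟩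
  exact Nat.sInf_mem this

lemma codeDist_le {y : V} (hy : y ∈ C) (v : V) : codeDist G C v ≤ G.dist v y :=
  Nat.sInf_le ⟨y, hy, rfl⟩

lemma codeDist_eq_zero {v : V} (hv : v ∈ C) : codeDist G C v = 0 :=
  Nat.le_zero.mp (by simpa [SimpleGraph.dist_self] using codeDist_le hv v)

lemma codeDist_eq_zero_iff (hconn : G.Connected) (hC : C.Nonempty) {v : V} :
    codeDist G C v = 0 ↔ v ∈ C := by
  refine ⟨fun h => ?_, codeDist_eq_zero⟩
  obtain ⟨y, hy, hd⟩ := codeDist_exists (G := G) hC v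
  rw [h, hconn.dist_eq_zero_iff] at hd
  exact hd ▸ hy

lemma adj_codeDist_le (hconn : G.Connected) (hC : C.Nonempty) {v z : V} (h : G.Adj v z) :
    codeDist G C z ≤ codeDist G C v + 1 := by
  obtain ⟨y, hy, hd⟩ := codeDist_exists (G := G) hC v
  calc codeDist G C z ≤ G.dist z y := codeDist_le hy z
    _ ≤ G.dist z v + G.dist v y := hconn.dist_triangle
    _ = codeDist G C v + 1 := by
        rw [hd, SimpleGraph.dist_eq_one_iff_adj.mpr h.symm]; omega

lemma codeDist_descent (hconn : G.Connected) (hC : C.Nonempty) {v : V} {i : ℕ}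
    (h : codeDist G C v = i + 1) : ∃ z, G.Adj v z ∧ codeDist G C z = i := by
  obtain ⟨y, hy, hd⟩ := codeDist_exists (G := G) hC v
  rw [h] at hd
  obtain ⟨p, hp⟩ := hconn.exists_walk_length_eq_dist v y
  rw [hd] at hp
  cases p with
  | nil => simp at hp
  | cons hadj q =>
      rename_i z
      refine ⟨z, hadj, ?_⟩
      have h1 : G.dist z y ≤ i := by
        have := SimpleGraph.dist_le q
        simp [SimpleGraph.Walk.length_cons] at hp
        omega
      have h2 : codeDist G C z ≤ i := le_trans (codeDist_le hy z) h1
      have h3 := adj_codeDist_le hconn hC hadj.symm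
      omega

lemma cells_nonempty (hconn : G.Connected) (hC : C.Nonempty) {ρ : ℕ}
    (hv : ∃ v, codeDist G C v = ρ) : ∀ i ≤ ρ, ∃ v, codeDist G C v = i := by
  have key : ∀ m i, i + m = ρ → ∃ v, codeDist G C v = i := by
    intro m
    induction m with
    | zero => intro i hi; simpa [← hi] using hv
    | succ m ih =>
        intro i hi
        obtain ⟨v, hv'⟩ := ih (i + 1) (by omega)
        obtain ⟨z, _, hz⟩ := codeDist_descent hconn hC hv'
        exact ⟨z, hz⟩
  intro i hi
  exact key (ρ - i) i (by omega)

end AuxCode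

lemma mem_spectrum_iff_exists' {n : Type*} [Fintype n] [DecidableEq n] (M : Matrix n n ℂ)
    (μ : ℂ) : μ ∈ spectrum ℂ M ↔ ∃ u : n → ℂ, u ≠ 0 ∧ M *ᵥ u = μ • u := by
  have halg : ∀ u : n → ℂ, (algebraMap ℂ (Matrix n n ℂ)) μ *ᵥ u = μ • u := by
    intro u
    rw [Algebra.algebraMap_eq_smul_one, Matrix.smul_mulVec, Matrix.one_mulVec]
  rw [spectrum.mem_iff, Matrix.isUnit_iff_isUnit_det, isUnit_iff_ne_zero, not_ne_iff,
    ← Matrix.exists_mulVec_eq_zero_iff]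
  constructor
  · rintro ⟨u, hu, h⟩
    refine ⟨u, hu, ?_⟩
    rw [Matrix.sub_mulVec, halg, sub_eq_zero] at h
    exact h.symm
  · rintro ⟨u, hu, h⟩
    exact ⟨u, hu, by rw [Matrix.sub_mulVec, halg, h, sub_self]⟩


theorem stmt6 {V : Type*} [Fintype V] [DecidableEq V]
    (G : SimpleGraph V) [DecidableRel G.Adj] (k D : ℕ) (b c : ℕ → ℕ)
    (hG : IsDRG G k D b c)
    (θ : Fin (D + 1) → ℝ) (hθ0 : θ 0 = k)
    (E : Fin (D + 1) → Matrix V V ℂ) (hPI : PrimIdem (G.adjMatrix ℂ) D θ E)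
    (C : Finset V) (ρ : ℕ) (γ α β : ℕ → ℕ)
    (hC : IsCRC G C ρ γ α β) :
    spectrum ℂ (quotientMatrix ℂ γ α β ρ) =
        (fun j : Fin (D + 1) => (θ j : ℂ)) ''
          ({0} ∪ {j : Fin (D + 1) | j ≠ 0 ∧ E j *ᵥ charVec C ≠ 0}) ∧
      (spectrum ℂ (quotientMatrix ℂ γ α β ρ)).ncard = ρ + 1 := by
  classical
  obtain ⟨hconn, hdeg, -⟩ := hG
  obtain ⟨hCne, hcov, hex, hγ, hα, hβ⟩ := hC
  obtain ⟨hθinj, hEE, hEH, hAE, hEsum, hEne⟩ := hPI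
  set A := G.adjMatrix ℂ with hA
  set x := charVec C with hx
  set U := quotientMatrix ℂ γ α β ρ with hU
  set S : Matrix V (Fin (ρ + 1)) ℂ := Matrix.of (fun v i => cellVec G C (i : ℕ) v) with hS
  have cells : ∀ i ≤ ρ, ∃ v, codeDist G C v = i := cells_nonempty hconn hCne hex
  have hθinjC : Function.Injective (fun j : Fin (D+1) => (θ j : ℂ)) :=
    fun a b h => hθinj (Complex.ofReal_injective h)
  -- Lipschitz bounds
  have hlip : ∀ {v z : V}, G.Adj v z →
      codeDist G C z ≤ codeDist G C v + 1 ∧ codeDist G C v ≤ codeDist G C z + 1 :=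
    fun h => ⟨adj_codeDist_le hconn hCne h, adj_codeDist_le hconn hCne h.symm⟩
  -- the key local count
  have L1 : ∀ (v : V) (j i : Fin (ρ + 1)), codeDist G C v = (i : ℕ) →
      (nbrsInCell G C (j : ℕ) v : ℂ) = U i j := by
    intro v j i hv
    have hiρ : (i : ℕ) ≤ ρ := by omega
    by_cases h1 : (i : ℕ) = (j : ℕ) + 1
    · have hval : nbrsInCell G C (j : ℕ) v = γ (i : ℕ) := by
        have hh := hγ (i : ℕ) (by omega) hiρ v hv
        have hj : (i : ℕ) - 1 = (j : ℕ) := by omega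
        rwa [hj] at hh
      rw [hval]
      simp [hU, quotientMatrix, h1]
    · by_cases h2 : (i : ℕ) = (j : ℕ)
      · have hval : nbrsInCell G C (j : ℕ) v = α (i : ℕ) := by
          rw [← h2]; exact hα (i : ℕ) hiρ v hv
        rw [hval, hU, quotientMatrix, Matrix.of_apply, if_neg h1, if_pos h2]
      · by_cases h3 : (j : ℕ) = (i : ℕ) + 1
        · have hval : nbrsInCell G C (j : ℕ) v = β (i : ℕ) := by
            rw [h3]; exact hβ (i : ℕ) hiρ v hv
          rw [hval, hU, quotientMatrix, Matrix.of_apply, if_neg h1, if_neg h2, if_pos h3]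
        · have hval : nbrsInCell G C (j : ℕ) v = 0 := by
            rw [nbrsInCell, Finset.card_eq_zero, Finset.filter_eq_empty_iff]
            rintro z _ ⟨hadj, hz⟩
            have := hlip hadj
            omega
          rw [hval]
          simp [hU, quotientMatrix, h1, h2, h3]
  -- column identity
  have L2 : ∀ (j : Fin (ρ + 1)) (v : V),
      (A *ᵥ cellVec G C (j : ℕ)) v = (nbrsInCell G C (j : ℕ) v : ℂ) := by
    intro j v
    rw [hA, SimpleGraph.adjMatrix_mulVec_apply, nbrsInCell]
    simp only [cellVec]
    rw [Finset.sum_boole]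
    congr 1
    rw [SimpleGraph.neighborFinset_eq_filter, Finset.filter_filter]
  -- matrix identity A S = S U
  have L3 : A * S = S * U := by
    ext v j
    have hd : codeDist G C v < ρ + 1 := Nat.lt_succ_of_le (hcov v)
    have hL : (A * S) v j = U ⟨codeDist G C v, hd⟩ j := by
      have h0 : (A * S) v j = (A *ᵥ cellVec G C (j : ℕ)) v := by
        simp [Matrix.mul_apply, Matrix.mulVec, dotProduct, hS]
      rw [h0, L2, L1 v j ⟨codeDist G C v, hd⟩ rfl]
    have hR : (S * U) v j = U ⟨codeDist G C v, hd⟩ j := by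
      rw [Matrix.mul_apply, Finset.sum_eq_single (⟨codeDist G C v, hd⟩ : Fin (ρ + 1))]
      · simp [hS, cellVec]
      · intro i _ hi
        have hne : codeDist G C v ≠ (i : ℕ) := fun h => hi (Fin.ext h.symm)
        simp [hS, cellVec, hne]
      · simp
    rw [hL, hR]
  -- injectivity of S
  have L4 : ∀ u : Fin (ρ + 1) → ℂ, S *ᵥ u = 0 → u = 0 := by
    intro u hu
    funext i
    obtain ⟨v, hv⟩ := cells (i : ℕ) (by omega)
    have hsum : (S *ᵥ u) v = u i := by
      simp only [Matrix.mulVec, dotProduct, hS, Matrix.of_apply, cellVec, hv]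
      rw [Finset.sum_eq_single i]
      · simp
      · intro j _ hj
        have hne : (i : ℕ) ≠ (j : ℕ) := fun h => hj (Fin.ext h.symm)
        simp [hne]
      · simp
    rw [hu] at hsum
    simpa using hsum.symm
  have hAS : ∀ u : Fin (ρ + 1) → ℂ, A *ᵥ (S *ᵥ u) = S *ᵥ (U *ᵥ u) := by
    intro u
    rw [Matrix.mulVec_mulVec, Matrix.mulVec_mulVec, L3]
  -- the span of the cell vectors
  set W : Submodule ℂ (V → ℂ) :=
    Submodule.span ℂ (Set.range fun i : Fin (ρ + 1) => cellVec G C (i : ℕ)) with hW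
  have hSsum : ∀ u : Fin (ρ + 1) → ℂ, (∑ i, u i • cellVec G C (i : ℕ)) = S *ᵥ u := by
    intro u
    funext v
    simp [Matrix.mulVec, dotProduct, hS, Finset.sum_apply, mul_comm]
  have hmemW : ∀ w, w ∈ W ↔ ∃ u, S *ᵥ u = w := by
    intro w
    rw [hW, Submodule.mem_span_range_iff_exists_fun]
    constructor
    · rintro ⟨u, hu⟩
      exact ⟨u, by rw [← hSsum]; exact hu⟩
    · rintro ⟨u, hu⟩
      exact ⟨u, by rw [hSsum]; exact hu⟩
  -- γ is nonzero
  have hγne : ∀ i, 1 ≤ i → i ≤ ρ → (γ i : ℂ) ≠ 0 := by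
    intro i h1 hρ
    obtain ⟨v, hv⟩ := cells i hρ
    obtain ⟨i', rfl⟩ : ∃ i', i = i' + 1 := ⟨i - 1, by omega⟩
    obtain ⟨z, hadj, hz⟩ := codeDist_descent hconn hCne hv
    have hcount := hγ (i' + 1) h1 hρ v hv
    have hmem : z ∈ Finset.univ.filter
        (fun z => G.Adj v z ∧ codeDist G C z = (i' + 1) - 1) := by
      simp only [Finset.mem_filter, Finset.mem_univ, true_and]
      exact ⟨hadj, by omega⟩
    have hpos : 0 < nbrsInCell G C ((i' + 1) - 1) v :=
      Finset.card_pos.mpr ⟨z, hmem⟩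
    rw [hcount] at hpos
    exact Nat.cast_ne_zero.mpr (by omega)
  -- cell induction: any A-invariant subspace containing x contains all cell vectors
  have hcell0 : cellVec G C 0 = x := by
    funext v
    simp [cellVec, hx, charVec, codeDist_eq_zero_iff hconn hCne]
  -- the three-term recurrence, pointwise
  have hrecur : ∀ j, j + 1 ≤ ρ →
      (γ (j + 1) : ℂ) • cellVec G C (j + 1) =
        A *ᵥ cellVec G C j - (α j : ℂ) • cellVec G C j -
          (if j = 0 then (0 : V → ℂ) else (β (j - 1) : ℂ) • cellVec G C (j - 1)) := by
    intro j hj1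
    funext v
    have hd : codeDist G C v ≤ ρ := hcov v
    have hAv : (A *ᵥ cellVec G C j) v = (nbrsInCell G C j v : ℂ) := by
      have h := L2 ⟨j, by omega⟩ v
      simpa using h
    have hUv : (nbrsInCell G C j v : ℂ) =
        U ⟨codeDist G C v, by omega⟩ ⟨j, by omega⟩ := by
      have h := L1 v ⟨j, by omega⟩ ⟨codeDist G C v, by omega⟩ rfl
      simpa using h
    have hcv : ∀ m : ℕ, cellVec G C m v = if codeDist G C v = m then 1 else 0 := fun m => rfl
    simp only [Pi.smul_apply, Pi.sub_apply, smul_eq_mul, hAv, hUv, hU, quotientMatrix,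
      Matrix.of_apply, hcv]
    by_cases hj0 : j = 0
    · subst hj0
      rw [if_pos rfl]
      simp only [Pi.zero_apply, sub_zero]
      by_cases e1 : codeDist G C v = 1
      · simp [e1]
      · by_cases e0 : codeDist G C v = 0
        · simp [e0, e1]
        · have n1 : ¬ codeDist G C v = 0 + 1 := by omega
          have n2 : ¬ (0 : ℕ) = codeDist G C v + 1 := by omega
          rw [if_neg n1, if_neg e0, if_neg n2, if_neg (by omega : ¬ codeDist G C v = 1),
            if_neg e0]
          ring
    · rw [if_neg hj0]
      obtain ⟨j', rfl⟩ : ∃ j', j = j' + 1 := ⟨j - 1, by omega⟩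
      simp only [Pi.smul_apply, smul_eq_mul, hcv, Nat.add_sub_cancel]
      by_cases e1 : codeDist G C v = j' + 1 + 1
      · have n2 : ¬ codeDist G C v = j' + 1 := by omega
        have n3 : ¬ codeDist G C v = j' := by omega
        have n4 : ¬ (j' + 1 : ℕ) = codeDist G C v + 1 := by omega
        rw [if_pos e1, if_pos e1, if_neg n2, if_neg n3, e1]
        ring
      · by_cases e2 : codeDist G C v = j' + 1
        · have n3 : ¬ codeDist G C v = j' := by omega
          have n4 : ¬ (j' + 1 : ℕ) = codeDist G C v + 1 := by omega
          rw [if_neg e1, if_neg e1, if_pos e2, if_pos e2, if_neg n3, e2]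
          ring
        · by_cases e3 : codeDist G C v = j'
          · have n4 : (j' + 1 : ℕ) = codeDist G C v + 1 := by omega
            rw [if_neg e1, if_neg e1, if_neg e2, if_neg e2, if_pos n4, if_pos e3, e3]
            ring
          · have n4 : ¬ (j' + 1 : ℕ) = codeDist G C v + 1 := by omega
            rw [if_neg e1, if_neg e1, if_neg e2, if_neg e2, if_neg n4, if_neg e3]
            ring
  have cellmem : ∀ Q : Submodule ℂ (V → ℂ), (∀ w ∈ Q, A *ᵥ w ∈ Q) → x ∈ Q →
      ∀ j ≤ ρ, cellVec G C j ∈ Q := by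
    intro Q hQinv hxQ j
    induction j using Nat.strong_induction_on with
    | _ j ih =>
      intro hjρ
      match j with
      | 0 => rw [hcell0]; exact hxQ
      | Nat.succ j' =>
        have hprev : cellVec G C j' ∈ Q := ih j' (by omega) (by omega)
        have hrhs : A *ᵥ cellVec G C j' - (α j' : ℂ) • cellVec G C j' -
            (if j' = 0 then (0 : V → ℂ) else (β (j' - 1) : ℂ) • cellVec G C (j' - 1)) ∈ Q := by
          refine Submodule.sub_mem Q (Submodule.sub_mem Q (hQinv _ hprev)
            (Submodule.smul_mem Q _ hprev)) ?_
          by_cases hj0 : j' = 0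
          · rw [if_pos hj0]; exact Submodule.zero_mem Q
          · rw [if_neg hj0]
            exact Submodule.smul_mem Q _ (ih (j' - 1) (by omega) (by omega))
        have hkey := hrecur j' hjρ
        have hγn : (γ (j' + 1) : ℂ) ≠ 0 := hγne (j' + 1) (by omega) hjρ
        have : cellVec G C (j' + 1) = (γ (j' + 1) : ℂ)⁻¹ •
            ((γ (j' + 1) : ℂ) • cellVec G C (j' + 1)) := by
          rw [smul_smul, inv_mul_cancel₀ hγn, one_smul]
        rw [this, hkey]
        exact Submodule.smul_mem Q _ hrhs
  -- Hermitian facts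
  have hAH : Aᴴ = A := by
    ext i j
    simp [hA, Matrix.conjTranspose_apply, SimpleGraph.adjMatrix_apply, G.adj_comm i j,
      apply_ite (star : ℂ → ℂ)]
  have hEA : ∀ l, E l * A = (θ l : ℂ) • E l := by
    intro l
    have h := congrArg Matrix.conjTranspose (hAE l)
    rw [Matrix.conjTranspose_mul, hAH, hEH] at h
    rwa [Matrix.conjTranspose_smul, hEH, Complex.star_def, Complex.conj_ofReal] at h
  have horth : ∀ i j, i ≠ j → E i * E j = (0 : Matrix V V ℂ) := by
    intro i j hij
    have h1 : (E i * A) * E j = (θ i : ℂ) • (E i * E j) := by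
      rw [hEA, Matrix.smul_mul]
    have h2 : E i * (A * E j) = (θ j : ℂ) • (E i * E j) := by
      rw [hAE, Matrix.mul_smul]
    have h3 : ((θ i : ℂ) - (θ j : ℂ)) • (E i * E j) = 0 := by
      rw [sub_smul, ← h1, ← h2, mul_assoc, sub_self]
    have hne : ((θ i : ℂ) - (θ j : ℂ)) ≠ 0 :=
      sub_ne_zero.mpr (fun h => hij (hθinjC h))
    simpa [smul_eq_zero, hne] using h3
  have hxsum : ∀ w : V → ℂ, ∑ l, E l *ᵥ w = w := by
    intro w
    have h1 : (∑ l, E l) *ᵥ w = w := by rw [hEsum, Matrix.one_mulVec]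
    have h2 : (∑ l, E l) *ᵥ w = ∑ l, E l *ᵥ w := by
      ext v
      simp [Matrix.mulVec, dotProduct, Matrix.sum_apply, Finset.sum_mul,
        Finset.sum_apply]
      rw [Finset.sum_comm]
    rw [← h2, h1]
  have hWinv : ∀ w ∈ W, A *ᵥ w ∈ W := by
    intro w hw
    obtain ⟨u, rfl⟩ := (hmemW w).mp hw
    exact (hmemW _).mpr ⟨U *ᵥ u, (hAS u).symm⟩
  have hxW : x ∈ W := by
    rw [← hcell0]
    apply Submodule.subset_span
    exact ⟨(0 : Fin (ρ + 1)), by simp⟩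
  have hpowW : ∀ n : ℕ, (A ^ n) *ᵥ x ∈ W := by
    intro n
    induction n with
    | zero => simpa [Matrix.one_mulVec] using hxW
    | succ n ihn =>
        have : A ^ (n + 1) *ᵥ x = A *ᵥ (A ^ n *ᵥ x) := by
          rw [Matrix.mulVec_mulVec, pow_succ']
        rw [this]
        exact hWinv _ ihn
  have haevalW : ∀ p : Polynomial ℂ, (Polynomial.aeval A p) *ᵥ x ∈ W := by
    intro p
    induction p using Polynomial.induction_on' with
    | add p q hp hq =>
        rw [map_add, Matrix.add_mulVec]
        exact Submodule.add_mem W hp hq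
    | monomial n a =>
        rw [Polynomial.aeval_monomial, Algebra.algebraMap_eq_smul_one, smul_mul_assoc,
          one_mul, Matrix.smul_mulVec]
        exact Submodule.smul_mem W _ (hpowW n)
  have hApowE : ∀ (n : ℕ) (l : Fin (D + 1)), A ^ n * E l = ((θ l : ℂ) ^ n) • E l := by
    intro n l
    induction n with
    | zero => simp
    | succ n ihn =>
        rw [pow_succ, mul_assoc, hAE, Matrix.mul_smul, ihn, smul_smul, pow_succ']
  have hpE : ∀ (p : Polynomial ℂ) (l : Fin (D + 1)),
      (Polynomial.aeval A p) * E l = (Polynomial.eval ((θ l : ℂ)) p) • E l := by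
    intro p l
    induction p using Polynomial.induction_on' with
    | add p q hp hq => rw [map_add, Matrix.add_mul, hp, hq, Polynomial.eval_add, add_smul]
    | monomial n a =>
        rw [Polynomial.aeval_monomial, Algebra.algebraMap_eq_smul_one, smul_mul_assoc,
          one_mul, smul_mul_assoc, hApowE, Polynomial.eval_monomial, smul_smul]
  -- E_j x lies in W
  have hExW : ∀ j : Fin (D + 1), E j *ᵥ x ∈ W := by
    intro j
    set p : Polynomial ℂ :=
      ∏ l ∈ Finset.univ.erase j, (Polynomial.X - Polynomial.C ((θ l : ℂ))) with hp
    set cj : ℂ := ∏ l ∈ Finset.univ.erase j, ((θ j : ℂ) - (θ l : ℂ)) with hcj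
    have hcjne : cj ≠ 0 := by
      rw [hcj]
      apply Finset.prod_ne_zero_iff.mpr
      intro l hl
      exact sub_ne_zero.mpr fun h => (Finset.mem_erase.mp hl).1 (hθinjC h).symm
    have hevalj : Polynomial.eval ((θ j : ℂ)) p = cj := by
      rw [hp, Polynomial.eval_prod, hcj]
      exact Finset.prod_congr rfl fun l _ => by
        rw [Polynomial.eval_sub, Polynomial.eval_X, Polynomial.eval_C]
    have hevall : ∀ l, l ≠ j → Polynomial.eval ((θ l : ℂ)) p = 0 := by
      intro l hl
      rw [hp, Polynomial.eval_prod]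
      apply Finset.prod_eq_zero (Finset.mem_erase.mpr ⟨hl, Finset.mem_univ l⟩)
      rw [Polynomial.eval_sub, Polynomial.eval_X, Polynomial.eval_C, sub_self]
    have haevalp : Polynomial.aeval A p = cj • E j := by
      have h1 : Polynomial.aeval A p = Polynomial.aeval A p * ∑ l, E l := by
        rw [hEsum, mul_one]
      rw [h1, Finset.mul_sum]
      rw [Finset.sum_eq_single j]
      · rw [hpE, hevalj]
      · intro l _ hl
        rw [hpE, hevall l hl, zero_smul]
      · intro h
        exact absurd (Finset.mem_univ j) h
    have : E j *ᵥ x = cj⁻¹ • ((Polynomial.aeval A p) *ᵥ x) := by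
      rw [haevalp, Matrix.smul_mulVec, smul_smul, inv_mul_cancel₀ hcjne, one_smul]
    rw [this]
    exact Submodule.smul_mem W _ (haevalW p)
  -- vanishing propagates
  have hEzero : ∀ l : Fin (D + 1), E l *ᵥ x = 0 → ∀ w ∈ W, E l *ᵥ w = 0 := by
    intro l hl w hw
    have hker : ∀ j ≤ ρ, cellVec G C j ∈ LinearMap.ker (Matrix.mulVecLin (E l)) := by
      apply cellmem
      · intro w' hw'
        rw [LinearMap.mem_ker, Matrix.mulVecLin_apply] at hw' ⊢
        rw [Matrix.mulVec_mulVec, hEA, Matrix.smul_mulVec, hw', smul_zero]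
      · rw [LinearMap.mem_ker, Matrix.mulVecLin_apply]
        exact hl
    have hle : W ≤ LinearMap.ker (Matrix.mulVecLin (E l)) := by
      rw [hW, Submodule.span_le]
      rintro _ ⟨i, rfl⟩
      exact hker (i : ℕ) (by omega)
    have := hle hw
    rwa [LinearMap.mem_ker, Matrix.mulVecLin_apply] at this
  set Tset : Set (Fin (D + 1)) := {j | E j *ᵥ x ≠ 0} with hT
  -- spectrum ⊇
  have hsub1 : (fun j : Fin (D+1) => (θ j : ℂ)) '' Tset ⊆ spectrum ℂ U := by
    rintro _ ⟨j, hj, rfl⟩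
    obtain ⟨u, hu⟩ := (hmemW _).mp (hExW j)
    have hune : u ≠ 0 := by
      rintro rfl
      rw [Matrix.mulVec_zero] at hu
      exact hj hu.symm
    rw [mem_spectrum_iff_exists']
    refine ⟨u, hune, ?_⟩
    have h1 : A *ᵥ (S *ᵥ u) = (θ j : ℂ) • (S *ᵥ u) := by
      rw [hu, Matrix.mulVec_mulVec, hAE, Matrix.smul_mulVec]
    have h2 : S *ᵥ (U *ᵥ u) = S *ᵥ ((θ j : ℂ) • u) := by
      rw [← hAS, h1, Matrix.mulVec_smul]
    have h3 : S *ᵥ (U *ᵥ u - (θ j : ℂ) • u) = 0 := by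
      rw [Matrix.mulVec_sub, h2, sub_self]
    exact sub_eq_zero.mp (L4 _ h3)
  -- spectrum ⊆
  have hsub2 : spectrum ℂ U ⊆ (fun j : Fin (D+1) => (θ j : ℂ)) '' Tset := by
    intro μ hμ
    obtain ⟨u, hune, huU⟩ := (mem_spectrum_iff_exists' _ _).mp hμ
    have hwW : S *ᵥ u ∈ W := (hmemW _).mpr ⟨u, rfl⟩
    have hwne : S *ᵥ u ≠ 0 := fun h => hune (L4 u h)
    have hAw : A *ᵥ (S *ᵥ u) = μ • (S *ᵥ u) := by
      rw [hAS, huU, Matrix.mulVec_smul]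
    obtain ⟨l, hl⟩ : ∃ l, E l *ᵥ (S *ᵥ u) ≠ 0 := by
      by_contra h
      push_neg at h
      apply hwne
      rw [← hxsum (S *ᵥ u)]
      exact Finset.sum_eq_zero fun l _ => h l
    have hEAw : (θ l : ℂ) • (E l *ᵥ (S *ᵥ u)) = μ • (E l *ᵥ (S *ᵥ u)) := by
      have h1 : E l *ᵥ (A *ᵥ (S *ᵥ u)) = (θ l : ℂ) • (E l *ᵥ (S *ᵥ u)) := by
        rw [Matrix.mulVec_mulVec, hEA, Matrix.smul_mulVec]
      rw [hAw, Matrix.mulVec_smul] at h1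
      exact h1.symm
    have hμθ : μ = (θ l : ℂ) := by
      have hz : ((θ l : ℂ) - μ) • (E l *ᵥ (S *ᵥ u)) = 0 := by
        rw [sub_smul, hEAw, sub_self]
      rcases smul_eq_zero.mp hz with h | h
      · exact (sub_eq_zero.mp h).symm
      · exact absurd h hl
    have hlT : l ∈ Tset := by
      show E l *ᵥ x ≠ 0
      intro h0
      exact hl (hEzero l h0 _ hwW)
    exact ⟨l, hlT, hμθ.symm⟩
  have hspec : spectrum ℂ U = (fun j : Fin (D+1) => (θ j : ℂ)) '' Tset :=
    le_antisymm hsub2 hsub1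
  -- k is an eigenvalue, hence 0 ∈ Tset
  have hk : (k : ℂ) ∈ spectrum ℂ U := by
    rw [mem_spectrum_iff_exists']
    refine ⟨fun _ => 1, fun h => one_ne_zero (congrFun h 0), ?_⟩
    funext i
    obtain ⟨v, hv⟩ := cells (i : ℕ) (by omega)
    have hrow : ∀ j : Fin (ρ + 1), U i j = (nbrsInCell G C (j : ℕ) v : ℂ) :=
      fun j => (L1 v j i hv).symm
    have hdeg' : (Finset.univ.filter fun z => G.Adj v z).card = k := by
      rw [← hdeg v, SimpleGraph.degree]
      rw [SimpleGraph.neighborFinset_eq_filter]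
    have hpart : (Finset.univ.filter fun z => G.Adj v z).card
        = ∑ j ∈ Finset.range (ρ + 1), nbrsInCell G C j v := by
      rw [Finset.card_eq_sum_card_fiberwise
        (f := fun z => codeDist G C z) (t := Finset.range (ρ + 1))
        (fun z _ => Finset.mem_range.mpr (Nat.lt_succ_of_le (hcov z)))]
      refine Finset.sum_congr rfl fun j _ => ?_
      rw [nbrsInCell, Finset.filter_filter]
    have hkey : ∑ j : Fin (ρ + 1), (nbrsInCell G C (j : ℕ) v : ℂ) = (k : ℂ) := by
      rw [← Nat.cast_sum]
      rw [Fin.sum_univ_eq_sum_range (fun j => nbrsInCell G C j v) (ρ + 1)]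
      rw [← hpart, hdeg']
    calc (U *ᵥ fun _ => (1 : ℂ)) i = ∑ j, U i j := by
          simp [Matrix.mulVec, dotProduct]
      _ = (k : ℂ) := by rw [Finset.sum_congr rfl fun j _ => hrow j, hkey]
      _ = ((k : ℂ) • fun _ => (1 : ℂ)) i := by simp
  have h0T : (0 : Fin (D + 1)) ∈ Tset := by
    obtain ⟨l, hl, hlk⟩ := hsub2 hk
    have : l = 0 := hθinjC (by simpa [hθ0] using hlk)
    exact this ▸ hl
  have hTeq : ({0} ∪ {j : Fin (D + 1) | j ≠ 0 ∧ E j *ᵥ charVec C ≠ 0} : Set (Fin (D+1)))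
      = Tset := by
    ext j
    simp only [Set.mem_union, Set.mem_singleton_iff, Set.mem_setOf_eq, hT, ← hx]
    constructor
    · rintro (rfl | ⟨-, h⟩)
      · exact h0T
      · exact h
    · intro h
      by_cases hj : j = 0
      · exact Or.inl hj
      · exact Or.inr ⟨hj, h⟩
  -- dimension count
  have hcard : Tset.ncard = ρ + 1 := by
    have hlin1 : LinearIndependent ℂ (fun i : Fin (ρ + 1) => cellVec G C (i : ℕ)) := by
      rw [Fintype.linearIndependent_iff]
      intro g hg
      have hg0 : g = 0 := L4 g (by rw [← hSsum]; exact hg)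
      intro i
      rw [hg0]
      rfl
    have hdimW : Module.finrank ℂ W = ρ + 1 := by
      rw [hW, finrank_span_eq_card hlin1, Fintype.card_fin]
    haveI : Fintype ↥Tset := Fintype.ofFinite _
    have hlin2 : LinearIndependent ℂ (fun j : ↥Tset => E (j : Fin (D + 1)) *ᵥ x) := by
      rw [Fintype.linearIndependent_iff]
      intro g hg l
      have happ := congrArg (fun w => Matrix.mulVecLin (E (l : Fin (D + 1))) w) hg
      simp only [map_sum, _root_.map_smul, Matrix.mulVecLin_apply, map_zero] at happ
      have hterm : ∀ j : ↥Tset, j ≠ l →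
          g j • (E (l : Fin (D + 1)) *ᵥ (E (j : Fin (D + 1)) *ᵥ x)) = 0 := by
        intro j hj
        have : (l : Fin (D + 1)) ≠ (j : Fin (D + 1)) := fun h => hj (Subtype.ext h.symm)
        rw [Matrix.mulVec_mulVec, horth _ _ this, Matrix.zero_mulVec, smul_zero]
      rw [Finset.sum_eq_single l (fun j _ hj => hterm j hj)
        (fun h => absurd (Finset.mem_univ l) h)] at happ
      rw [Matrix.mulVec_mulVec, hEE] at happ
      rcases smul_eq_zero.mp happ with h | h
      · exact h
      · exact absurd h l.2
    have hspan2 : Submodule.span ℂ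
        (Set.range fun j : ↥Tset => E (j : Fin (D + 1)) *ᵥ x) = W := by
      apply le_antisymm
      · rw [Submodule.span_le]
        rintro _ ⟨j, rfl⟩
        exact hExW _
      · set Q := Submodule.span ℂ
          (Set.range fun j : ↥Tset => E (j : Fin (D + 1)) *ᵥ x) with hQ
        have hQinv : ∀ w ∈ Q, A *ᵥ w ∈ Q := by
          intro w hw
          induction hw using Submodule.span_induction with
          | mem w hwmem =>
              obtain ⟨j, rfl⟩ := hwmem
              rw [Matrix.mulVec_mulVec, hAE, Matrix.smul_mulVec]
              exact Submodule.smul_mem Q _ (Submodule.subset_span ⟨j, rfl⟩)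
          | zero => rw [Matrix.mulVec_zero]; exact Submodule.zero_mem Q
          | add w₁ w₂ h₁ h₂ ih₁ ih₂ =>
              rw [Matrix.mulVec_add]; exact Submodule.add_mem Q ih₁ ih₂
          | smul a w₁ h₁ ih₁ =>
              rw [Matrix.mulVec_smul]; exact Submodule.smul_mem Q a ih₁
        have hxQ : x ∈ Q := by
          rw [← hxsum x]
          apply Submodule.sum_mem
          intro l _
          by_cases hl : E l *ᵥ x = 0
          · rw [hl]; exact Submodule.zero_mem Q
          · exact Submodule.subset_span ⟨⟨l, hl⟩, rfl⟩
        rw [hW, Submodule.span_le]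
        rintro _ ⟨i, rfl⟩
        exact cellmem Q hQinv hxQ (i : ℕ) (by omega)
    have hdim2 : Module.finrank ℂ W = Fintype.card ↥Tset := by
      rw [← hspan2, finrank_span_eq_card hlin2]
    rw [Set.ncard_eq_toFinset_card', Set.toFinset_card, ← hdim2, hdimW]
  constructor
  · rw [hspec, hTeq]
  · rw [hspec, ← hTeq, hTeq, Set.ncard_image_of_injective _ hθinjC, hcard]
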